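/- Let D be a maximal pointed convex cone in a finite-dimensional Euclidean space V of dimension ≥ 1. If H_u and H_v are both supports of D (i.e., D ⊆ H_u and D ⊆ H_v with u, v nonzero), then H_u = H_v. That is, D has a unique supporting closed half-space. -/

import Mathlib

open Set

noncomputable section

def IsCone {V : Type*} [AddCommGroup V] [Module ℝ V] (C : Set V) : Prop :=
  (0 : V) ∈ C ∧ ∀ r : ℝ, 0 ≤ r → ∀ v ∈ C, r • v ∈ C

def IsConvexCone {V : Type*} [AddCommGroup V] [Module ℝ V] (C : Set V) : Prop :=
  IsCone C ∧ ∀ u ∈ C, ∀ v ∈ C, u + v ∈ C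

def IsMaxPointedCone {V : Type*} [AddCommGroup V] [Module ℝ V] (D : Set V) : Prop :=
  IsConvexCone D ∧ D ∩ (-D) = {0} ∧ D ∪ (-D) = Set.univ

def hatCone {V : Type*} [AddCommGroup V] [Module ℝ V] (X : Set V) : Set V :=
  {0} ∪ {v | ∃ r : ℝ, 0 ≤ r ∧ ∃ x ∈ X, v = r • x}

def sphereN (n : ℕ) : Set (EuclideanSpace ℝ (Fin (n + 1))) := Metric.sphere 0 1

def PhiPlus (n : ℕ) : Set (EuclideanSpace ℝ (Fin (n + 1))) :=
  {x | x ∈ sphereN n ∧ ∃ m : Fin (n + 1), 0 < x m ∧ ∀ i, m < i → x i = 0}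

def PhiMinus (n : ℕ) : Set (EuclideanSpace ℝ (Fin (n + 1))) := {x | -x ∈ PhiPlus n}

def Ln (n : ℕ) : Set (Set (EuclideanSpace ℝ (Fin (n + 1)))) :=
  {X | ∃ D, IsMaxPointedCone D ∧ X = D ∩ PhiPlus n}

theorem stmt8 {V : Type*} [NormedAddCommGroup V] [InnerProductSpace ℝ V]
    [FiniteDimensional ℝ V] (hdim : 1 ≤ Module.finrank ℝ V)
    (D : Set V) (hD : IsMaxPointedCone D) (u v : V) (hu : u ≠ 0) (hv : v ≠ 0)
    (hDu : D ⊆ {x : V | (inner ℝ x u : ℝ) ≤ 0})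
    (hDv : D ⊆ {x : V | (inner ℝ x v : ℝ) ≤ 0}) :
    {x : V | (inner ℝ x u : ℝ) ≤ 0} = {x : V | (inner ℝ x v : ℝ) ≤ 0} := by
  obtain ⟨-, -, hunion⟩ := hD
  have key : ∀ a b : V, a ≠ 0 → D ⊆ {x : V | (inner ℝ x a : ℝ) ≤ 0} →
      D ⊆ {x : V | (inner ℝ x b : ℝ) ≤ 0} →
      ∀ x : V, 0 ≤ (inner ℝ x a : ℝ) → 0 ≤ (inner ℝ x b : ℝ) := by
    intro a b ha hDa hDb x hx
    have step : ∀ ε : ℝ, 0 < ε → 0 ≤ (inner ℝ x b : ℝ) + ε * (inner ℝ a b : ℝ) := by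
      intro ε hε
      have hxa : 0 < (inner ℝ (x + ε • a) a : ℝ) := by
        rw [inner_add_left, real_inner_smul_left, real_inner_self_eq_norm_sq]
        have h0 : 0 < ‖a‖ := norm_pos_iff.2 ha
        nlinarith [mul_pos hε (pow_pos h0 2)]
      have hnotD : x + ε • a ∉ D := fun h => absurd (hDa h) (by simpa using not_le.2 hxa)
      have hmem : -(x + ε • a) ∈ D := by
        have : x + ε • a ∈ D ∪ (-D) := by rw [hunion]; trivial
        rcases this with h | h
        · exact absurd h hnotD
        · simpa using h
      have := hDb hmem
      simp only [Set.mem_setOf_eq, inner_neg_left, inner_add_left, real_inner_smul_left] at this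
      linarith
    by_contra hcon
    push_neg at hcon
    rcases le_or_gt (inner ℝ a b : ℝ) 0 with h | h
    · have := step 1 one_pos
      nlinarith
    · have hε : (0:ℝ) < -(inner ℝ x b : ℝ) / (2 * (inner ℝ a b : ℝ)) :=
        div_pos (by linarith) (by linarith)
      have h2 := step _ hε
      have h3 : -(inner ℝ x b : ℝ) / (2 * (inner ℝ a b : ℝ)) * (inner ℝ a b : ℝ)
          = -(inner ℝ x b : ℝ) / 2 := by field_simp
      rw [h3] at h2
      linarith
  ext x
  simp only [Set.mem_setOf_eq]
  constructor
  · intro hxu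
    have : 0 ≤ (inner ℝ (-x) v : ℝ) := key u v hu hDu hDv (-x) (by rw [inner_neg_left]; linarith)
    rw [inner_neg_left] at this; linarith
  · intro hxv
    have : 0 ≤ (inner ℝ (-x) u : ℝ) := key v u hv hDv hDu (-x) (by rw [inner_neg_left]; linarith)
    rw [inner_neg_left] at this; linarith
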